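/- Let S be an isotropic (Abelian) additive subgroup of (ℤ/2)^{2n} with weight distribution {A_w}, and define its shadow Sh(S) = {E ∈ (ℤ/2)^{2n} : ⟨E,g⟩ ≡ wt(g) (mod 2) for all g ∈ S}. Then for every 0 ≤ w ≤ n, the number of weight-w elements of Sh(S) equals (1/|S|) Σ_{w'=0}^{n} (-1)^{w'} A_{w'} K_w(w';n); in particular Σ_{w'=0}^{n} (-1)^{w'} A_{w'} K_w(w';n) ≥ 0 for all w. -/

import Mathlib

open Finset

/-- An `n`-qubit Pauli operator modulo phase, identified with `(u, v) ∈ (ℤ/2)ⁿ × (ℤ/2)ⁿ`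
(corresponding to `Z^u X^v`). -/
abbrev Pauli (n : ℕ) := (Fin n → ZMod 2) × (Fin n → ZMod 2)

/-- The weight of a Pauli operator: the number of qubits on which it acts nontrivially. -/
def wtP {n : ℕ} (g : Pauli n) : ℕ :=
  (Finset.univ.filter fun i => g.1 i ≠ 0 ∨ g.2 i ≠ 0).card

/-- The symplectic inner product of two Pauli operators. -/
def sip {n : ℕ} (g h : Pauli n) : ZMod 2 :=
  ∑ i, (g.1 i * h.2 i + g.2 i * h.1 i)

/-- Quaternary Krawtchouk polynomial at integer points. -/
noncomputable def kraw (n i x : ℕ) : ℝ :=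
  ∑ j ∈ Finset.range (i + 1),
    (-1 : ℝ) ^ j * 3 ^ (i - j) * (x.choose j) * ((n - x).choose (i - j))

/-! ### Auxiliary material -/

abbrev V2 := ZMod 2 × ZMod 2

noncomputable def sgn (a : ZMod 2) : ℝ := if a = 0 then 1 else -1

lemma zmod2_cases : ∀ a : ZMod 2, a = 0 ∨ a = 1 := by decide

lemma zmod2_add_eq_zero : ∀ a b : ZMod 2, a + b = 0 ↔ a = b := by decide

lemma sgn_zero : sgn 0 = 1 := rfl

lemma sgn_pm (a : ZMod 2) : sgn a = 1 ∨ sgn a = -1 := by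
  unfold sgn; split <;> simp

lemma sgn_eq_one_iff (a : ZMod 2) : sgn a = 1 ↔ a = 0 := by
  unfold sgn; split <;> simp_all; norm_num

lemma sgn_add (a b : ZMod 2) : sgn (a + b) = sgn a * sgn b := by
  rcases zmod2_cases a with h | h <;> rcases zmod2_cases b with h' | h' <;>
    subst h <;> subst h' <;>
    simp [sgn, show (1 + 1 : ZMod 2) = 0 by decide, show (1 : ZMod 2) ≠ 0 by decide]

lemma sgn_natCast (m : ℕ) : sgn (m : ZMod 2) = (-1 : ℝ) ^ m := by
  induction m with
  | zero => simp [sgn]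
  | succ k ih =>
    push_cast
    rw [sgn_add, ih, pow_succ]
    simp [sgn, show (1 : ZMod 2) ≠ 0 by decide]

lemma sgn_sum {ι : Type*} (s : Finset ι) (f : ι → ZMod 2) :
    sgn (∑ i ∈ s, f i) = ∏ i ∈ s, sgn (f i) := by
  induction s using Finset.cons_induction with
  | empty => simp [sgn]
  | cons a s ha ih => rw [Finset.sum_cons, Finset.prod_cons, sgn_add, ih]

lemma sip_add_right {n : ℕ} (x g h : Pauli n) : sip x (g + h) = sip x g + sip x h := by
  simp only [sip, Prod.fst_add, Prod.snd_add, Pi.add_apply, ← Finset.sum_add_distrib]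
  exact Finset.sum_congr rfl fun i _ => by ring

lemma wt_pointwise : ∀ a b c d : ZMod 2,
    (if a + c ≠ 0 ∨ b + d ≠ 0 then (1 : ZMod 2) else 0) =
      ((if a ≠ 0 ∨ b ≠ 0 then (1 : ZMod 2) else 0) + if c ≠ 0 ∨ d ≠ 0 then (1 : ZMod 2) else 0)
        + (a * d + b * c) := by decide

lemma wtP_cast {n : ℕ} (g : Pauli n) :
    ((wtP g : ℕ) : ZMod 2) = ∑ i, (if g.1 i ≠ 0 ∨ g.2 i ≠ 0 then (1 : ZMod 2) else 0) := by
  rw [wtP, Finset.card_filter]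
  push_cast
  simp

lemma wtP_add {n : ℕ} (g h : Pauli n) :
    ((wtP (g + h) : ℕ) : ZMod 2) = (wtP g : ZMod 2) + (wtP h : ZMod 2) + sip g h := by
  rw [wtP_cast, wtP_cast, wtP_cast, sip, ← Finset.sum_add_distrib, ← Finset.sum_add_distrib]
  refine Finset.sum_congr rfl fun i _ => ?_
  simp only [Prod.fst_add, Prod.snd_add, Pi.add_apply]
  exact wt_pointwise _ _ _ _

lemma wtP_le {n : ℕ} (g : Pauli n) : wtP g ≤ n := by
  rw [wtP]
  simpa using Finset.card_filter_le univ (fun i => g.1 i ≠ 0 ∨ g.2 i ≠ 0)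

lemma coord_sum (b : V2) :
    ∑ a ∈ (univ \ {(0 : V2)}), sgn (a.1 * b.2 + a.2 * b.1) = if b = 0 then 3 else -1 := by
  have h1 : ∑ a ∈ (univ \ {(0 : V2)}), sgn (a.1 * b.2 + a.2 * b.1)
      = (∑ a : V2, sgn (a.1 * b.2 + a.2 * b.1)) - sgn 0 := by
    rw [Finset.sum_sdiff_eq_sub (by simp)]
    simp
  have huniv : (univ : Finset V2) = {(0,0), (0,1), (1,0), (1,1)} := by decide
  rw [h1, huniv]
  obtain ⟨b1, b2⟩ := b
  rcases zmod2_cases b1 with h | h <;> rcases zmod2_cases b2 with h' | h' <;>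
    subst h <;> subst h' <;>
    norm_num [sgn, Prod.ext_iff, show (1:ZMod 2) ≠ 0 by decide,
      show (1+1 : ZMod 2) = 0 by decide] <;>
    simp [show (2 : ZMod 2) = 0 by decide]

lemma pauli_add_self {n : ℕ} (h : Pauli n) : h + h = 0 := by
  ext i <;> simp [CharTwo.add_self_eq_zero]

lemma char_sum {G : Type*} [AddCommGroup G] [Fintype G] [DecidableEq G]
    (S : AddSubgroup G) [DecidablePred (· ∈ S)] (hself : ∀ g : G, g + g = 0) (χ : G → ℝ)
    (hmul : ∀ g ∈ S, ∀ h ∈ S, χ (g + h) = χ g * χ h)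
    (hval : ∀ g ∈ S, χ g = 1 ∨ χ g = -1)
    (hnt : ¬ (∀ g ∈ S, χ g = 1)) :
    ∑ g ∈ univ.filter (· ∈ S), χ g = 0 := by
  push_neg at hnt
  obtain ⟨h, hS, hne⟩ := hnt
  have hneg : χ h = -1 := (hval h hS).resolve_left hne
  have key : ∑ g ∈ univ.filter (· ∈ S), χ g = ∑ g ∈ univ.filter (· ∈ S), χ (g + h) := by
    refine Finset.sum_nbij' (fun g => g + h) (fun g => g + h) ?_ ?_ ?_ ?_ ?_
    · intro a ha; simp only [mem_filter, mem_univ, true_and] at *; exact S.add_mem ha hS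
    · intro a ha; simp only [mem_filter, mem_univ, true_and] at *; exact S.add_mem ha hS
    · intro a _; rw [add_assoc, hself, add_zero]
    · intro a _; rw [add_assoc, hself, add_zero]
    · intro a ha
      simp only [mem_filter, mem_univ, true_and] at ha
      rw [add_assoc, hself, add_zero]
  have key2 : ∑ g ∈ univ.filter (· ∈ S), χ (g + h)
      = - ∑ g ∈ univ.filter (· ∈ S), χ g := by
    rw [← Finset.sum_neg_distrib]
    refine Finset.sum_congr rfl fun a ha => ?_
    simp only [mem_filter, mem_univ, true_and] at ha
    rw [hmul _ ha _ hS, hneg]; ring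
  rw [key2] at key
  linarith

lemma supp_sum {n : ℕ} (w : ℕ) (c : Fin n → V2 → ℝ) (hc : ∀ i, c i 0 = 1) :
    ∑ z ∈ univ.filter (fun z : Fin n → V2 => (univ.filter fun i => z i ≠ 0).card = w),
      ∏ i, c i (z i)
      = ∑ T ∈ powersetCard w (univ : Finset (Fin n)),
          ∏ i ∈ T, (∑ a ∈ (univ \ {(0 : V2)}), c i a) := by
  have hmaps : ∀ z ∈ univ.filter
      (fun z : Fin n → V2 => (univ.filter fun i => z i ≠ 0).card = w),
      (univ.filter fun i => z i ≠ 0) ∈ powersetCard w (univ : Finset (Fin n)) := by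
    intro z hz
    simp only [mem_filter, mem_univ, true_and] at hz
    exact mem_powersetCard.mpr ⟨subset_univ _, hz⟩
  rw [← Finset.sum_fiberwise_of_maps_to hmaps (fun z => ∏ i, c i (z i))]
  refine Finset.sum_congr rfl fun T hT => ?_
  rw [mem_powersetCard] at hT
  have hset : ((univ.filter (fun z : Fin n → V2 => (univ.filter fun i => z i ≠ 0).card = w)).filter
      (fun z => univ.filter (fun i => z i ≠ 0) = T))
      = Fintype.piFinset (fun i => if i ∈ T then (univ \ {(0:V2)}) else {0}) := by
    ext z
    simp only [mem_filter, mem_univ, true_and, Fintype.mem_piFinset]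
    constructor
    · rintro ⟨hw, hsupp⟩ i
      have hiff : z i ≠ 0 ↔ i ∈ T := by rw [← hsupp]; simp
      by_cases hi : i ∈ T
      · simp [hi, hiff.mpr hi]
      · simp only [hi, if_neg, mem_singleton, if_false]
        by_contra hzi
        exact hi (hiff.mp hzi)
    · intro hmem
      have hsupp : univ.filter (fun i => z i ≠ 0) = T := by
        ext i
        simp only [mem_filter, mem_univ, true_and]
        have := hmem i
        by_cases hi : i ∈ T
        · simp only [hi, if_pos, mem_sdiff, mem_univ, mem_singleton, true_and] at this
          exact ⟨fun _ => hi, fun _ => this⟩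
        · rw [if_neg hi] at this
          simp only [mem_singleton] at this
          simp [this, hi]
      exact ⟨by rw [hsupp, hT.2], hsupp⟩
  rw [hset, ← Finset.prod_univ_sum]
  have hterm : ∀ i, (∑ a ∈ (if i ∈ T then univ \ {(0:V2)} else {0}), c i a)
      = if i ∈ T then (∑ a ∈ univ \ {(0:V2)}, c i a) else 1 := by
    intro i; split <;> simp [hc]
  calc ∏ i, (∑ a ∈ (if i ∈ T then univ \ {(0:V2)} else {0}), c i a)
      = ∏ i, (if i ∈ T then (∑ a ∈ univ \ {(0:V2)}, c i a) else 1) :=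
        Finset.prod_congr rfl fun i _ => hterm i
    _ = ∏ i ∈ univ ∩ T, (∑ a ∈ univ \ {(0:V2)}, c i a) := Finset.prod_ite_mem _ _ _
    _ = ∏ i ∈ T, (∑ a ∈ univ \ {(0:V2)}, c i a) := by rw [Finset.univ_inter]

lemma count_inter {α : Type*} [Fintype α] [DecidableEq α] (A : Finset α) (w j : ℕ) (hj : j ≤ w) :
    ((powersetCard w (univ : Finset α)).filter fun T => (T ∩ A).card = j).card
      = A.card.choose j * (Fintype.card α - A.card).choose (w - j) := by
  rw [← Finset.card_powersetCard j A, ← Finset.card_compl A,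
    ← Finset.card_powersetCard (w - j) Aᶜ, ← Finset.card_product]
  refine Finset.card_bij' (fun T _ => (T ∩ A, T \ A)) (fun P _ => P.1 ∪ P.2) ?_ ?_ ?_ ?_
  · intro T hT
    simp only [mem_filter, mem_powersetCard] at hT
    obtain ⟨⟨_, hcard⟩, hj'⟩ := hT
    refine Finset.mem_product.mpr ⟨mem_powersetCard.mpr ⟨inter_subset_right, hj'⟩,
      mem_powersetCard.mpr ⟨?_, ?_⟩⟩
    · intro x hx
      simp only [mem_sdiff] at hx
      simpa using hx.2
    · dsimp only
      have := Finset.card_sdiff_add_card_inter T A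
      omega
  · intro P hP
    rw [Finset.mem_product, mem_powersetCard, mem_powersetCard] at hP
    obtain ⟨⟨hPA, hPc⟩, ⟨hQA, hQc⟩⟩ := hP
    have hdisj : Disjoint P.1 P.2 := by
      refine Finset.disjoint_left.mpr fun x hx hx2 => ?_
      have := hQA hx2
      simp only [Finset.mem_compl] at this
      exact this (hPA hx)
    simp only [mem_filter, mem_powersetCard]
    refine ⟨⟨subset_univ _, ?_⟩, ?_⟩
    · rw [Finset.card_union_of_disjoint hdisj, hPc, hQc]; omega
    · have h1 : (P.1 ∪ P.2) ∩ A = P.1 := by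
        ext x
        simp only [mem_inter, mem_union]
        constructor
        · rintro ⟨hx | hx, hxA⟩
          · exact hx
          · exact absurd hxA (by simpa using hQA hx)
        · intro hx; exact ⟨Or.inl hx, hPA hx⟩
      rw [h1, hPc]
  · intro T hT
    simp only [mem_filter, mem_powersetCard] at hT
    ext x
    simp only [mem_union, mem_inter, mem_sdiff]
    tauto
  · intro P hP
    rw [Finset.mem_product, mem_powersetCard, mem_powersetCard] at hP
    obtain ⟨⟨hPA, hPc⟩, ⟨hQA, hQc⟩⟩ := hP
    have hQ : ∀ x ∈ P.2, x ∉ A := fun x hx => by simpa using hQA hx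
    have h1 : (P.1 ∪ P.2) ∩ A = P.1 := by
      ext x
      simp only [mem_inter, mem_union]
      constructor
      · rintro ⟨hx | hx, hxA⟩
        · exact hx
        · exact absurd hxA (hQ x hx)
      · intro hx; exact ⟨Or.inl hx, hPA hx⟩
    have h2 : (P.1 ∪ P.2) \ A = P.2 := by
      ext x
      simp only [mem_sdiff, mem_union]
      constructor
      · rintro ⟨hx | hx, hxA⟩
        · exact absurd (hPA hx) hxA
        · exact hx
      · intro hx; exact ⟨Or.inr hx, hQ x hx⟩
    rw [h1, h2]

lemma kraw_sum {n : ℕ} (w : ℕ) (y : Pauli n) :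
    ∑ x ∈ univ.filter (fun x : Pauli n => wtP x = w), sgn (sip x y) = kraw n w (wtP y) := by
  classical
  set A : Finset (Fin n) := univ.filter (fun i => y.1 i ≠ 0 ∨ y.2 i ≠ 0) with hA
  have step1 : ∑ x ∈ univ.filter (fun x : Pauli n => wtP x = w), sgn (sip x y)
      = ∑ z ∈ univ.filter (fun z : Fin n → V2 => (univ.filter fun i => z i ≠ 0).card = w),
          ∏ i, sgn ((z i).1 * y.2 i + (z i).2 * y.1 i) := by
    refine Finset.sum_nbij' (fun x => fun i => (x.1 i, x.2 i))
      (fun z => (fun i => (z i).1, fun i => (z i).2)) ?_ ?_ ?_ ?_ ?_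
    · intro x hx
      simp only [mem_filter, mem_univ, true_and] at *
      rw [← hx, wtP]
      congr 1
      refine Finset.filter_congr fun i _ => ?_
      simp only [Ne, Prod.ext_iff, not_and_or, Prod.fst_zero, Prod.snd_zero]
    · intro z hz
      simp only [mem_filter, mem_univ, true_and] at *
      rw [wtP, ← hz]
      congr 1
      refine Finset.filter_congr fun i _ => ?_
      simp only [Ne, Prod.ext_iff, not_and_or, Prod.fst_zero, Prod.snd_zero]
    · intro x _; rfl
    · intro z _; rfl
    · intro x _
      dsimp only
      rw [sip, sgn_sum]
  rw [step1, supp_sum w (fun i a => sgn (a.1 * y.2 i + a.2 * y.1 i)) (fun i => by simp [sgn])]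
  have hcoord : ∀ i, (∑ a ∈ (univ \ {(0:V2)}), sgn (a.1 * y.2 i + a.2 * y.1 i))
      = if i ∈ A then (-1 : ℝ) else 3 := by
    intro i
    rw [coord_sum (y.1 i, y.2 i)]
    by_cases hi : i ∈ A
    · rw [if_pos hi, if_neg]
      simp only [hA, mem_filter, mem_univ, true_and] at hi
      simp only [Prod.ext_iff, not_and_or]
      tauto
    · rw [if_neg hi, if_pos]
      simp only [hA, mem_filter, mem_univ, true_and, not_or, not_not] at hi
      simp [Prod.ext_iff, hi.1, hi.2]
  have step2 : ∀ T ∈ powersetCard w (univ : Finset (Fin n)),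
      (∏ i ∈ T, (∑ a ∈ (univ \ {(0:V2)}), sgn (a.1 * y.2 i + a.2 * y.1 i)))
        = (-1 : ℝ) ^ (T ∩ A).card * 3 ^ (w - (T ∩ A).card) := by
    intro T hT
    rw [mem_powersetCard] at hT
    have hprod : (∏ i ∈ T, (∑ a ∈ (univ \ {(0:V2)}), sgn (a.1 * y.2 i + a.2 * y.1 i)))
        = ∏ i ∈ T, (if i ∈ A then (-1 : ℝ) else 3) :=
      Finset.prod_congr rfl fun i _ => hcoord i
    rw [hprod, ← Finset.prod_filter_mul_prod_filter_not T (· ∈ A)]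
    have e1 : ∏ i ∈ T.filter (· ∈ A), (if i ∈ A then (-1 : ℝ) else 3)
        = (-1 : ℝ) ^ (T ∩ A).card := by
      rw [← Finset.filter_mem_eq_inter, Finset.prod_congr rfl
        (fun i hi => if_pos (Finset.mem_filter.mp hi).2), Finset.prod_const]
    have e2 : ∏ i ∈ T.filter (fun i => ¬ i ∈ A), (if i ∈ A then (-1 : ℝ) else 3)
        = (3 : ℝ) ^ (w - (T ∩ A).card) := by
      rw [Finset.prod_congr rfl (fun i hi => if_neg (Finset.mem_filter.mp hi).2),
        Finset.prod_const, ← Finset.sdiff_eq_filter]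
      congr 1
      have := Finset.card_sdiff_add_card_inter T A
      omega
    rw [e1, e2]
  rw [Finset.sum_congr rfl step2]
  have hmaps2 : ∀ T ∈ powersetCard w (univ : Finset (Fin n)), (T ∩ A).card ∈ range (w + 1) := by
    intro T hT
    rw [mem_powersetCard] at hT
    rw [mem_range, Nat.lt_succ_iff, ← hT.2]
    exact Finset.card_le_card inter_subset_left
  rw [← Finset.sum_fiberwise_of_maps_to hmaps2
    (fun T => (-1 : ℝ) ^ (T ∩ A).card * 3 ^ (w - (T ∩ A).card))]
  have hwtA : wtP y = A.card := rfl
  rw [hwtA, kraw]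
  refine Finset.sum_congr rfl fun j hj => ?_
  rw [mem_range, Nat.lt_succ_iff] at hj
  have hinner : ∑ T ∈ (powersetCard w (univ : Finset (Fin n))).filter
      (fun T => (T ∩ A).card = j), (-1 : ℝ) ^ (T ∩ A).card * 3 ^ (w - (T ∩ A).card)
      = ((A.card.choose j * (n - A.card).choose (w - j) : ℕ) : ℝ)
          * ((-1 : ℝ) ^ j * 3 ^ (w - j)) := by
    rw [Finset.sum_congr rfl (fun T hT => by
      rw [(Finset.mem_filter.mp hT).2]), Finset.sum_const, count_inter A w j hj,
      Fintype.card_fin, nsmul_eq_mul]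
  rw [hinner]
  push_cast
  ring

/-- Rains' shadow enumerator identity: the weight enumerator of the shadow
`Sh(S) = {E : ⟨E,g⟩ ≡ wt(g) (mod 2) ∀ g ∈ S}` of an isotropic subgroup `S` is given by
the signed MacWilliams transform of the weight distribution of `S`; in particular the
transform is nonnegative. -/
theorem shadow_enumerator {n : ℕ} (S : AddSubgroup (Pauli n))
    (hiso : ∀ g ∈ S, ∀ h ∈ S, sip g h = 0) (w : ℕ) (hw : w ≤ n) :
    ({x | (∀ g ∈ S, sip x g = (wtP g : ZMod 2)) ∧ wtP x = w}.ncard : ℝ) =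
      (1 / (Nat.card S : ℝ)) *
        ∑ w' ∈ Finset.range (n + 1),
          (-1 : ℝ) ^ w' * ({x | x ∈ S ∧ wtP x = w'}.ncard : ℝ) * kraw n w w' ∧
    0 ≤ ∑ w' ∈ Finset.range (n + 1),
          (-1 : ℝ) ^ w' * ({x | x ∈ S ∧ wtP x = w'}.ncard : ℝ) * kraw n w w' := by
  classical
  set SF : Finset (Pauli n) := univ.filter (· ∈ S) with hSF
  set ShW : Finset (Pauli n) :=
    univ.filter (fun x : Pauli n => (∀ g ∈ S, sip x g = (wtP g : ZMod 2)) ∧ wtP x = w) with hShW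
  have hAeq : ∀ w', ({x | x ∈ S ∧ wtP x = w'} : Set (Pauli n)).ncard
      = (SF.filter (fun g => wtP g = w')).card := by
    intro w'
    rw [show ({x | x ∈ S ∧ wtP x = w'} : Set (Pauli n))
        = ↑(SF.filter fun g => wtP g = w') by ext x; simp [hSF]]
    exact Set.ncard_coe_finset _
  have hShEq : ({x | (∀ g ∈ S, sip x g = (wtP g : ZMod 2)) ∧ wtP x = w} : Set (Pauli n)).ncard
      = ShW.card := by
    rw [show ({x | (∀ g ∈ S, sip x g = (wtP g : ZMod 2)) ∧ wtP x = w} : Set (Pauli n))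
        = ↑ShW by ext x; simp [hShW]]
    exact Set.ncard_coe_finset _
  have hcardS : (Nat.card S : ℕ) = SF.card := by
    rw [Nat.card_eq_fintype_card]
    rw [hSF]
    exact Fintype.card_subtype _
  have hSFpos : 0 < SF.card := by
    refine Finset.card_pos.mpr ⟨0, ?_⟩
    simp [hSF, S.zero_mem]
  -- the double sum
  have key : (SF.card : ℝ) * (ShW.card : ℝ)
      = ∑ w' ∈ Finset.range (n + 1),
          (-1 : ℝ) ^ w' * ((SF.filter (fun g => wtP g = w')).card : ℝ) * kraw n w w' := by
    have lhs_eq : ∑ x ∈ univ.filter (fun x : Pauli n => wtP x = w),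
        ∑ g ∈ SF, sgn (sip x g + (wtP g : ZMod 2))
        = (SF.card : ℝ) * (ShW.card : ℝ) := by
      have hx_eval : ∀ x : Pauli n, (∑ g ∈ SF, sgn (sip x g + (wtP g : ZMod 2)))
          = if (∀ g ∈ S, sip x g = (wtP g : ZMod 2)) then (SF.card : ℝ) else 0 := by
        intro x
        by_cases hx : ∀ g ∈ S, sip x g = (wtP g : ZMod 2)
        · rw [if_pos hx]
          rw [Finset.sum_congr rfl (fun g hg => ?_), Finset.sum_const, nsmul_eq_mul, mul_one]
          simp only [hSF, mem_filter, mem_univ, true_and] at hg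
          rw [hx g hg]
          rw [show ((wtP g : ZMod 2) + (wtP g : ZMod 2)) = 0 from
            (zmod2_add_eq_zero _ _).mpr rfl]
          exact sgn_zero
        · rw [if_neg hx]
          refine char_sum S (pauli_add_self) (fun g => sgn (sip x g + (wtP g : ZMod 2))) ?_
            (fun g _ => sgn_pm _) ?_
          · intro g hg h hh
            rw [sip_add_right, wtP_add, hiso g hg h hh, add_zero, ← sgn_add]
            congr 1
            ring
          · push_neg at hx ⊢
            obtain ⟨g, hg, hne⟩ := hx
            refine ⟨g, hg, ?_⟩
            intro hone
            rw [sgn_eq_one_iff] at hone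
            exact hne ((zmod2_add_eq_zero _ _).mp hone)
      rw [Finset.sum_congr rfl (fun x _ => hx_eval x), Finset.sum_ite, Finset.sum_const,
        Finset.sum_const_zero, add_zero, nsmul_eq_mul]
      have : (univ.filter (fun x : Pauli n => wtP x = w)).filter
          (fun x => ∀ g ∈ S, sip x g = (wtP g : ZMod 2)) = ShW := by
        ext x
        simp only [hShW, mem_filter, mem_univ, true_and]
        tauto
      rw [this]
      ring
    have rhs_eq : ∑ x ∈ univ.filter (fun x : Pauli n => wtP x = w),
        ∑ g ∈ SF, sgn (sip x g + (wtP g : ZMod 2))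
        = ∑ g ∈ SF, (-1 : ℝ) ^ (wtP g) * kraw n w (wtP g) := by
      rw [Finset.sum_comm]
      refine Finset.sum_congr rfl fun g _ => ?_
      rw [Finset.sum_congr rfl (fun x _ => sgn_add (sip x g) (wtP g : ZMod 2)),
        ← Finset.sum_mul, kraw_sum w g, sgn_natCast]
      ring
    rw [← lhs_eq, rhs_eq]
    have hmaps : ∀ g ∈ SF, wtP g ∈ range (n + 1) := fun g _ =>
      mem_range.mpr (Nat.lt_succ_of_le (wtP_le g))
    rw [← Finset.sum_fiberwise_of_maps_to hmaps (fun g => (-1 : ℝ) ^ (wtP g) * kraw n w (wtP g))]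
    refine Finset.sum_congr rfl fun w' hw' => ?_
    rw [Finset.sum_congr rfl (fun g hg => by rw [(Finset.mem_filter.mp hg).2]),
      Finset.sum_const, nsmul_eq_mul]
    ring
  constructor
  · rw [hShEq]
    simp only [hAeq]
    rw [← key, hcardS]
    field_simp
  · simp only [hAeq]
    rw [← key]
    positivity
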